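/- Define u(ψ) = 𝓕₁²(ψ)/𝓕₀²(ψ), Y(ψ) = (𝓕₀²(ψ)+𝓕₂²(ψ))/(2𝓕₀²(ψ)), Z(ψ) = (𝓕₀¹(ψ)−𝓕₂¹(ψ))/(2√(2𝓕₀²(ψ))) and Z_⊥(ψ) = (𝓕₀¹(ψ)+𝓕₂¹(ψ))/(2√(2𝓕₀²(ψ))). Then, as ψ → 0⁺: Y(ψ) = 1/2 + u(ψ)²/8 + O(u(ψ)⁴), Z(ψ) = 1/2 − u(ψ)²/8 + O(u(ψ)⁴), and Z_⊥(ψ) = 1/2 − u(ψ)²/8 + O(u(ψ)⁴). -/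

import Mathlib

open MeasureTheory Set Filter Asymptotics

/-- `C(ψ) = π` for `0 ≤ ψ ≤ π/4`, `C(ψ) = arccos(-cot ψ)` for `π/4 < ψ < 3π/4`. -/
noncomputable def Cpsi (ψ : ℝ) : ℝ :=
  if ψ ≤ Real.pi / 4 then Real.pi else Real.arccos (-(Real.cos ψ / Real.sin ψ))

/-- `𝓕_N^s(ψ) = (1/(πΓ(s+1))) ∫₀^{C(ψ)} cos(Nθ)(cos ψ + sin ψ cos θ)^s dθ`. -/
noncomputable def calF (N : ℕ) (s ψ : ℝ) : ℝ :=
  (1 / (Real.pi * Real.Gamma (s + 1))) *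
    ∫ θ in (0 : ℝ)..Cpsi ψ, Real.cos (N * θ) * (Real.cos ψ + Real.sin ψ * Real.cos θ) ^ s

/-- `u(ψ) = 𝓕₁²(ψ)/𝓕₀²(ψ)`. -/
noncomputable def uFun (ψ : ℝ) : ℝ := calF 1 2 ψ / calF 0 2 ψ

/-- `Y(ψ) = (𝓕₀²(ψ)+𝓕₂²(ψ))/(2𝓕₀²(ψ))`. -/
noncomputable def Yfun (ψ : ℝ) : ℝ := (calF 0 2 ψ + calF 2 2 ψ) / (2 * calF 0 2 ψ)

/-- `Z(ψ) = (𝓕₀¹(ψ)-𝓕₂¹(ψ))/(2√(2𝓕₀²(ψ)))`. -/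
noncomputable def Zfun (ψ : ℝ) : ℝ :=
  (calF 0 1 ψ - calF 2 1 ψ) / (2 * Real.sqrt (2 * calF 0 2 ψ))

/-- `Z_⊥(ψ) = (𝓕₀¹(ψ)+𝓕₂¹(ψ))/(2√(2𝓕₀²(ψ)))`. -/
noncomputable def Zperp (ψ : ℝ) : ℝ :=
  (calF 0 1 ψ + calF 2 1 ψ) / (2 * Real.sqrt (2 * calF 0 2 ψ))

set_option maxHeartbeats 1000000

/-! ### Auxiliary derivative and integral computations -/

private lemma hasDerivAt_sin_mul (k θ : ℝ) :
    HasDerivAt (fun x : ℝ => Real.sin (k * x)) (k * Real.cos (k * θ)) θ := by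
  exact HasDerivAt.congr_deriv ((Real.hasDerivAt_sin (k * θ)).comp θ ((hasDerivAt_id θ).const_mul k)) (by ring)

private lemma sin_three_pi : Real.sin (3 * Real.pi) = 0 := by
  rw [show (3:ℝ) * Real.pi = 2 * Real.pi + Real.pi by ring, Real.sin_add]
  simp [Real.sin_two_pi, Real.cos_two_pi]

private lemma sin_four_pi : Real.sin (4 * Real.pi) = 0 := by
  rw [show (4:ℝ) * Real.pi = 2 * Real.pi + 2 * Real.pi by ring, Real.sin_add]
  simp [Real.sin_two_pi]

private lemma intI0 (c s : ℝ) :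
    ∫ θ in (0:ℝ)..Real.pi, (c + s * Real.cos θ) ^ 2
      = Real.pi * (c ^ 2 + s ^ 2 / 2) := by
  have h : ∀ θ ∈ Set.uIcc (0:ℝ) Real.pi,
      HasDerivAt (fun x : ℝ => (c ^ 2 + s ^ 2 / 2) * x + 2 * s * c * Real.sin x
          + s ^ 2 / 4 * Real.sin (2 * x))
        ((c + s * Real.cos θ) ^ 2) θ := by
    intro θ _
    have h2 := (((hasDerivAt_id θ).const_mul (c ^ 2 + s ^ 2 / 2)).add
        ((Real.hasDerivAt_sin θ).const_mul (2 * s * c))).add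
        ((hasDerivAt_sin_mul 2 θ).const_mul (s ^ 2 / 4))
    refine h2.congr_deriv ?_
    rw [Real.cos_two_mul]; ring
  rw [intervalIntegral.integral_eq_sub_of_hasDerivAt h
    ((Continuous.intervalIntegrable (by continuity) _ _))]
  simp [Real.sin_pi, Real.sin_two_pi]; ring

private lemma intI1 (c s : ℝ) :
    ∫ θ in (0:ℝ)..Real.pi, Real.cos θ * (c + s * Real.cos θ) ^ 2
      = Real.pi * (s * c) := by
  have h : ∀ θ ∈ Set.uIcc (0:ℝ) Real.pi,
      HasDerivAt (fun x : ℝ => s * c * x + (c ^ 2 + 3 * s ^ 2 / 4) * Real.sin x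
          + s * c / 2 * Real.sin (2 * x) + s ^ 2 / 12 * Real.sin (3 * x))
        (Real.cos θ * (c + s * Real.cos θ) ^ 2) θ := by
    intro θ _
    have h2 := ((((hasDerivAt_id θ).const_mul (s * c)).add
        ((Real.hasDerivAt_sin θ).const_mul (c ^ 2 + 3 * s ^ 2 / 4))).add
        ((hasDerivAt_sin_mul 2 θ).const_mul (s * c / 2))).add
        ((hasDerivAt_sin_mul 3 θ).const_mul (s ^ 2 / 12))
    refine h2.congr_deriv ?_
    rw [Real.cos_two_mul, Real.cos_three_mul]; ring
  rw [intervalIntegral.integral_eq_sub_of_hasDerivAt h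
    ((Continuous.intervalIntegrable (by continuity) _ _))]
  simp [Real.sin_pi, Real.sin_two_pi, sin_three_pi]; ring

private lemma intI2 (c s : ℝ) :
    ∫ θ in (0:ℝ)..Real.pi, Real.cos (2 * θ) * (c + s * Real.cos θ) ^ 2
      = Real.pi * (s ^ 2 / 4) := by
  have h : ∀ θ ∈ Set.uIcc (0:ℝ) Real.pi,
      HasDerivAt (fun x : ℝ => s ^ 2 / 4 * x + s * c * Real.sin x
          + (c ^ 2 / 2 + s ^ 2 / 4) * Real.sin (2 * x) + s * c / 3 * Real.sin (3 * x)
          + s ^ 2 / 16 * Real.sin (4 * x))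
        (Real.cos (2 * θ) * (c + s * Real.cos θ) ^ 2) θ := by
    intro θ _
    have h2 := (((((hasDerivAt_id θ).const_mul (s ^ 2 / 4)).add
        ((Real.hasDerivAt_sin θ).const_mul (s * c))).add
        ((hasDerivAt_sin_mul 2 θ).const_mul (c ^ 2 / 2 + s ^ 2 / 4))).add
        ((hasDerivAt_sin_mul 3 θ).const_mul (s * c / 3))).add
        ((hasDerivAt_sin_mul 4 θ).const_mul (s ^ 2 / 16))
    refine h2.congr_deriv ?_
    have h4 : Real.cos (4 * θ) = 2 * Real.cos (2 * θ) ^ 2 - 1 := by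
      rw [show (4:ℝ) * θ = 2 * (2 * θ) by ring, Real.cos_two_mul]
    rw [h4, Real.cos_three_mul, Real.cos_two_mul]; ring
  rw [intervalIntegral.integral_eq_sub_of_hasDerivAt h
    ((Continuous.intervalIntegrable (by continuity) _ _))]
  simp [Real.sin_pi, Real.sin_two_pi, sin_three_pi, sin_four_pi]; ring

private lemma intJ0 (c s : ℝ) :
    ∫ θ in (0:ℝ)..Real.pi, (c + s * Real.cos θ) = Real.pi * c := by
  have h : ∀ θ ∈ Set.uIcc (0:ℝ) Real.pi,
      HasDerivAt (fun x : ℝ => c * x + s * Real.sin x) (c + s * Real.cos θ) θ := by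
    intro θ _
    exact HasDerivAt.congr_deriv (((hasDerivAt_id θ).const_mul c).add ((Real.hasDerivAt_sin θ).const_mul s)) (by ring)
  rw [intervalIntegral.integral_eq_sub_of_hasDerivAt h
    ((Continuous.intervalIntegrable (by continuity) _ _))]
  simp [Real.sin_pi]; ring

private lemma intJ2 (c s : ℝ) :
    ∫ θ in (0:ℝ)..Real.pi, Real.cos (2 * θ) * (c + s * Real.cos θ) = 0 := by
  have h : ∀ θ ∈ Set.uIcc (0:ℝ) Real.pi,
      HasDerivAt (fun x : ℝ => c / 2 * Real.sin (2 * x) + s / 2 * Real.sin x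
          + s / 6 * Real.sin (3 * x))
        (Real.cos (2 * θ) * (c + s * Real.cos θ)) θ := by
    intro θ _
    have h2 := (((hasDerivAt_sin_mul 2 θ).const_mul (c / 2)).add
        ((Real.hasDerivAt_sin θ).const_mul (s / 2))).add
        ((hasDerivAt_sin_mul 3 θ).const_mul (s / 6))
    refine h2.congr_deriv ?_
    rw [Real.cos_three_mul, Real.cos_two_mul]; ring
  rw [intervalIntegral.integral_eq_sub_of_hasDerivAt h
    ((Continuous.intervalIntegrable (by continuity) _ _))]
  simp [Real.sin_pi, Real.sin_two_pi, sin_three_pi]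

/-! ### Values of `calF` for `ψ ≤ π/4` -/

private lemma rpow_two_eq (x : ℝ) : x ^ (2:ℝ) = x ^ (2:ℕ) := by
  rw [← Real.rpow_natCast]; norm_num

private lemma gamma_three : Real.Gamma ((2:ℝ) + 1) = 2 := by
  rw [Real.Gamma_add_one (two_ne_zero), Real.Gamma_two]; norm_num

private lemma gamma_two' : Real.Gamma ((1:ℝ) + 1) = 1 := by
  norm_num [Real.Gamma_two]

private lemma calF02 {ψ : ℝ} (h : ψ ≤ Real.pi / 4) :
    calF 0 2 ψ = (Real.cos ψ ^ 2 + Real.sin ψ ^ 2 / 2) / 2 := by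
  simp only [calF, Cpsi, if_pos h, Nat.cast_zero, zero_mul, Real.cos_zero, one_mul,
    rpow_two_eq, gamma_three]
  rw [intI0]
  field_simp [Real.pi_ne_zero]

private lemma calF12 {ψ : ℝ} (h : ψ ≤ Real.pi / 4) :
    calF 1 2 ψ = Real.sin ψ * Real.cos ψ / 2 := by
  simp only [calF, Cpsi, if_pos h, Nat.cast_one, one_mul, rpow_two_eq, gamma_three]
  rw [intI1]
  field_simp [Real.pi_ne_zero]

private lemma calF22 {ψ : ℝ} (h : ψ ≤ Real.pi / 4) :
    calF 2 2 ψ = Real.sin ψ ^ 2 / 8 := by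
  simp only [calF, Cpsi, if_pos h, Nat.cast_ofNat, rpow_two_eq, gamma_three]
  rw [intI2]
  field_simp [Real.pi_ne_zero]; ring

private lemma calF01 {ψ : ℝ} (h : ψ ≤ Real.pi / 4) :
    calF 0 1 ψ = Real.cos ψ := by
  simp only [calF, Cpsi, if_pos h, Nat.cast_zero, zero_mul, Real.cos_zero, one_mul,
    Real.rpow_one, gamma_two']
  rw [intJ0]
  field_simp [Real.pi_ne_zero]

private lemma calF21 {ψ : ℝ} (h : ψ ≤ Real.pi / 4) :
    calF 2 1 ψ = 0 := by
  simp only [calF, Cpsi, if_pos h, Nat.cast_ofNat, Real.rpow_one, gamma_two']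
  rw [intJ2]
  simp

/-! ### Purely algebraic estimates -/

private lemma auxY (c s a : ℝ) (ha : a = c ^ 2 + s ^ 2 / 2) (hs : s ^ 2 = 1 - c ^ 2)
    (hc : 1 / 2 ≤ c ^ 2) :
    |(a / 2 + s ^ 2 / 8) / a - (1 / 2 + (s * c / a) ^ 2 / 8)|
      ≤ 8 * |(s * c / a) ^ 4| := by
  have hc1 : c ^ 2 ≤ 1 := by nlinarith [sq_nonneg s]
  have ha34 : 3 / 4 ≤ a := by nlinarith
  have ha1 : a ≤ 1 := by nlinarith
  have ha0 : (0:ℝ) < a := by linarith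
  have e : (a / 2 + s ^ 2 / 8) / a - (1 / 2 + (s * c / a) ^ 2 / 8)
      = s ^ 2 * s ^ 2 / (16 * a ^ 2) := by
    subst ha
    field_simp
    ring
  rw [e]
  have hU : (s * c / a) ^ 4 = s ^ 2 * s ^ 2 * (c ^ 2 * c ^ 2) / (a ^ 2 * a ^ 2) := by
    field_simp
  rw [hU, abs_of_nonneg (by positivity), abs_of_nonneg (by positivity), ← mul_div_assoc]
  rw [div_le_div_iff₀ (by positivity) (by positivity)]
  have h1 : a ^ 2 ≤ 1 := by nlinarith
  have h2 : 1 / 4 ≤ c ^ 2 * c ^ 2 := by nlinarith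
  have hs4 : 0 ≤ s ^ 2 * s ^ 2 := by positivity
  have ha2 : 0 ≤ a ^ 2 := sq_nonneg a
  nlinarith [mul_le_mul_of_nonneg_left h1 (mul_nonneg hs4 ha2),
    mul_le_mul_of_nonneg_left h2 (mul_nonneg hs4 ha2)]

private lemma absBound (Z B U : ℝ) (hZ0 : 0 ≤ Z) (hB14 : 1 / 4 ≤ B) (_hU0 : 0 ≤ U)
    (hd : B ^ 2 - Z ^ 2 ≤ 2 * U) (hd0 : 0 ≤ B ^ 2 - Z ^ 2) : |Z - B| ≤ 8 * U := by
  have hZleB : Z ≤ B := by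
    by_contra hcon
    push_neg at hcon
    have : B ^ 2 < Z ^ 2 := by nlinarith
    linarith
  have h1 : (B - Z) * (1 / 4) ≤ (B - Z) * (B + Z) := by
    apply mul_le_mul_of_nonneg_left (by linarith) (by linarith)
  have h2 : (B - Z) * (B + Z) = B ^ 2 - Z ^ 2 := by ring
  rw [abs_sub_comm, abs_of_nonneg (by linarith)]
  linarith

private lemma auxZ (c s a r : ℝ) (ha : a = c ^ 2 + s ^ 2 / 2) (hs : s ^ 2 = 1 - c ^ 2)
    (hc : 1 / 2 ≤ c ^ 2) (hc0 : 0 ≤ c) (hr : r = Real.sqrt a) :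
    |c / (2 * r) - (1 / 2 - (s * c / a) ^ 2 / 8)| ≤ 8 * |(s * c / a) ^ 4| := by
  have hc1 : c ^ 2 ≤ 1 := by nlinarith [sq_nonneg s]
  have ha34 : 3 / 4 ≤ a := by nlinarith
  have ha1 : a ≤ 1 := by nlinarith
  have ha0 : (0:ℝ) < a := by linarith
  have hq : c ^ 2 = 2 * a - 1 := by linarith
  have ht : s ^ 2 = 2 - 2 * a := by linarith
  have hr2 : r ^ 2 = a := by rw [hr]; exact Real.sq_sqrt ha0.le
  have hr0 : 0 < r := hr ▸ Real.sqrt_pos.mpr ha0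
  have hu2 : (s * c / a) ^ 2 = (2 - 2 * a) * (2 * a - 1) / a ^ 2 := by
    rw [div_pow, mul_pow, hq, ht]
  have hu4 : (s * c / a) ^ 4 = (2 - 2 * a) ^ 2 * (2 * a - 1) ^ 2 / (a ^ 2) ^ 2 := by
    rw [show ((s * c / a) ^ 4) = ((s * c / a) ^ 2) ^ 2 by ring, hu2, div_pow, mul_pow]
  have hZ2 : (c / (2 * r)) ^ 2 = (2 * a - 1) / (4 * a) := by
    rw [div_pow, mul_pow, hq, hr2]; norm_num
  have hbeq : 1 / 2 - (s * c / a) ^ 2 / 8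
      = 1 / 2 - (2 - 2 * a) * (2 * a - 1) / (8 * a ^ 2) := by rw [hu2]; ring
  have hB14 : 1 / 4 ≤ 1 / 2 - (2 - 2 * a) * (2 * a - 1) / (8 * a ^ 2) := by
    have hX : (2 - 2 * a) * (2 * a - 1) / (8 * a ^ 2) ≤ 1 / 4 := by
      rw [div_le_iff₀ (by positivity)]; nlinarith
    linarith
  have hdiff : (1 / 2 - (2 - 2 * a) * (2 * a - 1) / (8 * a ^ 2)) ^ 2 - (c / (2 * r)) ^ 2
      = (2 - 2 * a) ^ 2 * (4 * a ^ 2 + (2 * a - 1) ^ 2) / (64 * a ^ 4) := by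
    rw [hZ2]; field_simp; ring
  have hnum : 0 ≤ (2 - 2 * a) ^ 2 * (4 * a ^ 2 + (2 * a - 1) ^ 2) / (64 * a ^ 4) := by
    positivity
  have hU0 : (0:ℝ) ≤ (2 - 2 * a) ^ 2 * (2 * a - 1) ^ 2 / (a ^ 2) ^ 2 := by positivity
  have hkey : (2 - 2 * a) ^ 2 * (4 * a ^ 2 + (2 * a - 1) ^ 2) / (64 * a ^ 4)
      ≤ 2 * ((2 - 2 * a) ^ 2 * (2 * a - 1) ^ 2 / (a ^ 2) ^ 2) := by
    rw [← mul_div_assoc, div_le_div_iff₀ (by positivity) (by positivity)]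
    have hT : (0:ℝ) ≤ (2 - 2 * a) ^ 2 * a ^ 4 := by positivity
    have h21 : 1 / 2 ≤ 2 * a - 1 := by linarith
    have hfac : 4 * a ^ 2 + (2 * a - 1) ^ 2 ≤ 128 * (2 * a - 1) ^ 2 := by nlinarith
    calc (2 - 2 * a) ^ 2 * (4 * a ^ 2 + (2 * a - 1) ^ 2) * (a ^ 2) ^ 2
        = (2 - 2 * a) ^ 2 * a ^ 4 * (4 * a ^ 2 + (2 * a - 1) ^ 2) := by ring
      _ ≤ (2 - 2 * a) ^ 2 * a ^ 4 * (128 * (2 * a - 1) ^ 2) :=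
          mul_le_mul_of_nonneg_left hfac hT
      _ = 2 * ((2 - 2 * a) ^ 2 * (2 * a - 1) ^ 2) * (64 * a ^ 4) := by ring
  rw [hbeq, hu4,
    abs_of_nonneg (show (0:ℝ) ≤ (2 - 2 * a) ^ 2 * (2 * a - 1) ^ 2 / (a ^ 2) ^ 2 by positivity)]
  exact absBound (c / (2 * r)) _ _ (div_nonneg hc0 (by linarith)) hB14 hU0
    (hdiff.trans_le hkey) (le_of_le_of_eq hnum hdiff.symm)

/-! ### Main theorem -/

/-- As `ψ → 0⁺`: `Y = 1/2 + u²/8 + O(u⁴)`, `Z = 1/2 - u²/8 + O(u⁴)`,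
`Z_⊥ = 1/2 - u²/8 + O(u⁴)`. -/
theorem YZ_expansion_diffusive :
    ((fun ψ => Yfun ψ - (1 / 2 + uFun ψ ^ 2 / 8)) =O[nhdsWithin 0 (Set.Ioi 0)]
      fun ψ => uFun ψ ^ 4) ∧
    ((fun ψ => Zfun ψ - (1 / 2 - uFun ψ ^ 2 / 8)) =O[nhdsWithin 0 (Set.Ioi 0)]
      fun ψ => uFun ψ ^ 4) ∧
    ((fun ψ => Zperp ψ - (1 / 2 - uFun ψ ^ 2 / 8)) =O[nhdsWithin 0 (Set.Ioi 0)]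
      fun ψ => uFun ψ ^ 4) := by
  have hmem : Set.Ioo (0:ℝ) (Real.pi / 4) ∈ nhdsWithin (0:ℝ) (Set.Ioi 0) :=
    Ioo_mem_nhdsGT_of_mem ⟨le_refl 0, by positivity⟩
  have main : ∀ ψ ∈ Set.Ioo (0:ℝ) (Real.pi / 4),
      |Yfun ψ - (1 / 2 + uFun ψ ^ 2 / 8)| ≤ 8 * |uFun ψ ^ 4| ∧
      |Zfun ψ - (1 / 2 - uFun ψ ^ 2 / 8)| ≤ 8 * |uFun ψ ^ 4| ∧
      |Zperp ψ - (1 / 2 - uFun ψ ^ 2 / 8)| ≤ 8 * |uFun ψ ^ 4| := by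
    intro ψ hψ
    have h4 : ψ ≤ Real.pi / 4 := hψ.2.le
    set c := Real.cos ψ with hcdef
    set s := Real.sin ψ with hsdef
    have hpy : s ^ 2 = 1 - c ^ 2 := Real.sin_sq ψ
    have hcge : Real.sqrt 2 / 2 ≤ c := by
      rw [hcdef, ← Real.cos_pi_div_four]
      exact Real.cos_le_cos_of_nonneg_of_le_pi hψ.1.le
        (by linarith [Real.pi_pos]) h4
    have hsqrt2 : Real.sqrt 2 ^ 2 = 2 := Real.sq_sqrt (by norm_num)
    have hsqrt2nn : (0:ℝ) ≤ Real.sqrt 2 := Real.sqrt_nonneg 2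
    have hc2 : 1 / 2 ≤ c ^ 2 := by nlinarith
    have hc0 : 0 ≤ c := le_trans (by positivity) hcge
    have ha0 : (0:ℝ) < c ^ 2 + s ^ 2 / 2 := by nlinarith [sq_nonneg s]
    have huF : uFun ψ = s * c / (c ^ 2 + s ^ 2 / 2) := by
      rw [uFun, calF12 h4, calF02 h4, div_div_div_cancel_right₀]
      norm_num
    have hYF : Yfun ψ = ((c ^ 2 + s ^ 2 / 2) / 2 + s ^ 2 / 8) / (c ^ 2 + s ^ 2 / 2) := by
      rw [Yfun, calF02 h4, calF22 h4,
        show 2 * ((c ^ 2 + s ^ 2 / 2) / 2) = c ^ 2 + s ^ 2 / 2 by ring]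
    have h2F0 : 2 * calF 0 2 ψ = c ^ 2 + s ^ 2 / 2 := by rw [calF02 h4]; ring
    have hZF : Zfun ψ = c / (2 * Real.sqrt (c ^ 2 + s ^ 2 / 2)) := by
      rw [Zfun, calF01 h4, calF21 h4, h2F0, sub_zero]
    have hZpF : Zperp ψ = c / (2 * Real.sqrt (c ^ 2 + s ^ 2 / 2)) := by
      rw [Zperp, calF01 h4, calF21 h4, h2F0, add_zero]
    refine ⟨?_, ?_, ?_⟩
    · rw [hYF, huF]
      exact auxY c s _ rfl hpy hc2
    · rw [hZF, huF]
      exact auxZ c s _ _ rfl hpy hc2 hc0 rfl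
    · rw [hZpF, huF]
      exact auxZ c s _ _ rfl hpy hc2 hc0 rfl
  refine ⟨?_, ?_, ?_⟩ <;>
    · rw [Asymptotics.isBigO_iff]
      refine ⟨8, ?_⟩
      filter_upwards [hmem] with ψ hψ
      simp only [Real.norm_eq_abs]
      first
        | exact (main ψ hψ).1
        | exact (main ψ hψ).2.1
        | exact (main ψ hψ).2.2
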